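/- Let f be a circle endomorphism of degree d ≥ 2 whose nested Markov partitions have bounded geometry: there is C > 0 with |I_{κ_n}| ≥ C |I_{σ^-(κ_n)}| for all finite words κ_n. Then there exist constants D > 0 and 0 < τ < 1 such that ε_n ≤ D τ^n for all n ≥ 1, where ε_n is the maximal length of intervals in the n-th Markov partition. -/

import Mathlib

/-- The composition of inverse branches `g_i(x) = F⁻¹(x + i)` along a word. -/
def branchComp (d : ℕ) (Finv : ℝ → ℝ) (w : List (Fin d)) : ℝ → ℝ :=
  w.foldr (fun i f => (fun x => Finv (x + (i : ℝ))) ∘ f) id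

/-- The interval `I_{κ_n}` of the Markov partition. -/
def cylInterval (d : ℕ) (Finv : ℝ → ℝ) (w : List (Fin d)) : Set ℝ :=
  branchComp d Finv w '' Set.Icc 0 1

/-- The length `|I_{κ_n}|` of the Markov partition interval. -/
noncomputable def cylLen (d : ℕ) (Finv : ℝ → ℝ) (w : List (Fin d)) : ℝ :=
  sSup (cylInterval d Finv w) - sInf (cylInterval d Finv w)

/-- Image of a closed interval under a continuous monotone map. -/
theorem stmt7_image_Icc {h : ℝ → ℝ} (hm : Monotone h) (hc : Continuous h)
    {a b : ℝ} (hab : a ≤ b) : h '' Set.Icc a b = Set.Icc (h a) (h b) := by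
  apply Set.Subset.antisymm
  · rintro _ ⟨x, hx, rfl⟩
    exact ⟨hm hx.1, hm hx.2⟩
  · exact intermediate_value_Icc hab hc.continuousOn

/-- bounded geometry (`|I_{κ_n}| ≥ C |I_{σ⁻κ_n}|`) of the nested
Markov partitions of a circle endomorphism of degree `d ≥ 2` implies exponential
decay `ε_n ≤ D τⁿ` of the maximal interval length. -/
theorem stmt_7 (d : ℕ) (hd : 2 ≤ d) (C : ℝ) (hC : 0 < C)
    (F Finv : ℝ → ℝ)
    (hFcont : Continuous F) (hFmono : StrictMono F) (hFbij : Function.Bijective F)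
    (hFper : ∀ x, F (x + 1) = F x + d) (hF0 : F 0 = 0)
    (hFinv₁ : ∀ x, Finv (F x) = x) (hFinv₂ : ∀ x, F (Finv x) = x)
    (hbg : ∀ w : List (Fin d), w ≠ [] →
      C * cylLen d Finv w.dropLast ≤ cylLen d Finv w) :
    ∃ D > (0 : ℝ), ∃ τ : ℝ, 0 < τ ∧ τ < 1 ∧
      ∀ n : ℕ, 1 ≤ n → ∀ w : List (Fin d), w.length = n →
        cylLen d Finv w ≤ D * τ ^ n := by
  -- `Finv` is monotone
  have hFinvmono : Monotone Finv := by
    intro a b hab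
    rcases lt_or_eq_of_le hab with hlt | rfl
    · refine le_of_lt (hFmono.lt_iff_lt.mp ?_)
      rw [hFinv₂, hFinv₂]; exact hlt
    · exact le_refl _
  -- `Finv` is continuous (as the inverse of an order isomorphism of ℝ)
  have hFinvcont : Continuous Finv := by
    set e : ℝ ≃o ℝ := StrictMono.orderIsoOfSurjective F hFmono hFbij.surjective with he
    have heq : Finv = ⇑e.symm := by
      funext x
      obtain ⟨y, rfl⟩ := hFbij.surjective x
      rw [hFinv₁, he, StrictMono.orderIsoOfSurjective_symm_apply_self]
    rw [heq]
    exact OrderIso.continuous e.symm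
  -- monotonicity and continuity of the branch compositions
  have hbranch : ∀ w : List (Fin d),
      Monotone (branchComp d Finv w) ∧ Continuous (branchComp d Finv w) := by
    intro w
    induction w with
    | nil => exact ⟨monotone_id, continuous_id⟩
    | cons i w ih =>
      constructor
      · exact fun a b hab => hFinvmono (add_le_add (ih.1 hab) (le_refl _))
      · exact (hFinvcont.comp (continuous_id.add continuous_const)).comp ih.2
  -- the length formula
  have hlen : ∀ w : List (Fin d),
      cylLen d Finv w = branchComp d Finv w 1 - branchComp d Finv w 0 := by
    intro w
    have h01 : branchComp d Finv w 0 ≤ branchComp d Finv w 1 :=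
      (hbranch w).1 zero_le_one
    rw [cylLen, cylInterval, stmt7_image_Icc (hbranch w).1 (hbranch w).2 zero_le_one,
      csSup_Icc h01, csInf_Icc h01]
  have hnonneg : ∀ w : List (Fin d), 0 ≤ cylLen d Finv w := by
    intro w
    rw [hlen]
    exact sub_nonneg.mpr ((hbranch w).1 zero_le_one)
  -- branch composition under append
  have happend : ∀ (u v : List (Fin d)),
      branchComp d Finv (u ++ v) = branchComp d Finv u ∘ branchComp d Finv v := by
    intro u v
    induction u with
    | nil => rfl
    | cons i u ih =>
      show (fun x => Finv (x + (i : ℝ))) ∘ branchComp d Finv (u ++ v) = _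
      rw [ih]; rfl
  -- endpoints
  have hFinv0 : Finv 0 = 0 := by
    have := hFinv₁ 0; rwa [hF0] at this
  have hFinvd : Finv (d : ℝ) = 1 := by
    have hF1 : F 1 = (d : ℝ) := by
      have := hFper 0; rwa [zero_add, hF0, zero_add] at this
    have := hFinv₁ 1; rwa [hF1] at this
  -- the children of a word
  have hchildlen : ∀ (u : List (Fin d)) (j : Fin d),
      cylLen d Finv (u ++ [j]) =
        branchComp d Finv u (Finv ((j : ℝ) + 1)) - branchComp d Finv u (Finv (j : ℝ)) := by
    intro u j
    rw [hlen, happend]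
    show branchComp d Finv u (Finv (1 + (j : ℝ))) -
        branchComp d Finv u (Finv (0 + (j : ℝ))) = _
    rw [zero_add, add_comm (1 : ℝ)]
  -- the children partition the parent (summation of lengths)
  have hsum : ∀ u : List (Fin d),
      ∑ j : Fin d, cylLen d Finv (u ++ [j]) = cylLen d Finv u := by
    intro u
    set a : ℕ → ℝ := fun k => branchComp d Finv u (Finv (k : ℝ)) with ha
    have hterm : ∀ j : Fin d, cylLen d Finv (u ++ [j]) = a ((j : ℕ) + 1) - a (j : ℕ) := by
      intro j
      rw [hchildlen u j, ha]
      push_cast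
      ring_nf
    calc ∑ j : Fin d, cylLen d Finv (u ++ [j])
        = ∑ j : Fin d, (a ((j : ℕ) + 1) - a (j : ℕ)) := by
          exact Finset.sum_congr rfl fun j _ => hterm j
      _ = ∑ k ∈ Finset.range d, (a (k + 1) - a k) :=
          Fin.sum_univ_eq_sum_range (fun k => a (k + 1) - a k) d
      _ = a d - a 0 := Finset.sum_range_sub a d
      _ = cylLen d Finv u := by
          rw [ha, hlen]
          simp [hFinv0, hFinvd]
  -- each child is at most a (1 - C) fraction of the parent
  have hchild : ∀ (u : List (Fin d)) (j : Fin d),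
      cylLen d Finv (u ++ [j]) ≤ (1 - C) * cylLen d Finv u := by
    intro u j
    have hL := hnonneg u
    have hlow : ∀ j' : Fin d, C * cylLen d Finv u ≤ cylLen d Finv (u ++ [j']) := by
      intro j'
      have h := hbg (u ++ [j']) (by simp)
      rwa [List.dropLast_concat] at h
    have hsplit : cylLen d Finv (u ++ [j]) +
        ∑ j' ∈ Finset.univ.erase j, cylLen d Finv (u ++ [j']) = cylLen d Finv u := by
      have h := Finset.add_sum_erase Finset.univ
        (fun j' => cylLen d Finv (u ++ [j'])) (Finset.mem_univ j)
      rw [h]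
      exact hsum u
    have hcard : (Finset.univ.erase j).card = d - 1 := by
      rw [Finset.card_erase_of_mem (Finset.mem_univ j), Finset.card_univ, Fintype.card_fin]
    have hrest : C * cylLen d Finv u ≤
        ∑ j' ∈ Finset.univ.erase j, cylLen d Finv (u ++ [j']) := by
      have h1 : (Finset.univ.erase j).card • (C * cylLen d Finv u) ≤
          ∑ j' ∈ Finset.univ.erase j, cylLen d Finv (u ++ [j']) :=
        Finset.card_nsmul_le_sum _ _ _ (fun j' _ => hlow j')
      have h2 : (1 : ℝ) ≤ ((d - 1 : ℕ) : ℝ) := by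
        have : 1 ≤ d - 1 := by omega
        exact_mod_cast this
      calc C * cylLen d Finv u = 1 * (C * cylLen d Finv u) := (one_mul _).symm
        _ ≤ ((d - 1 : ℕ) : ℝ) * (C * cylLen d Finv u) :=
            mul_le_mul_of_nonneg_right h2 (by positivity)
        _ = (Finset.univ.erase j).card • (C * cylLen d Finv u) := by
            rw [hcard, nsmul_eq_mul]
        _ ≤ _ := h1
    nlinarith [hsplit, hrest]
  -- the exponential decay
  set τ : ℝ := max (1 - C) (1 / 2) with hτ
  have hτpos : 0 < τ := lt_max_of_lt_right (by norm_num)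
  have hτlt : τ < 1 := max_lt (by linarith) (by norm_num)
  have main : ∀ w : List (Fin d), cylLen d Finv w ≤ τ ^ w.length := by
    intro w
    induction w using List.reverseRecOn with
    | nil =>
      rw [hlen]
      simp [branchComp]
    | append_singleton u j ih =>
      have hstep : cylLen d Finv (u ++ [j]) ≤ τ * cylLen d Finv u := by
        calc cylLen d Finv (u ++ [j]) ≤ (1 - C) * cylLen d Finv u := hchild u j
          _ ≤ τ * cylLen d Finv u :=
            mul_le_mul_of_nonneg_right (le_max_left _ _) (hnonneg u)
      calc cylLen d Finv (u ++ [j]) ≤ τ * cylLen d Finv u := hstep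
        _ ≤ τ * τ ^ u.length := mul_le_mul_of_nonneg_left ih hτpos.le
        _ = τ ^ (u ++ [j]).length := by
            rw [List.length_append, List.length_singleton, pow_succ]
            ring
  refine ⟨1, one_pos, τ, hτpos, hτlt, ?_⟩
  intro n hn w hw
  rw [one_mul, ← hw]
  exact main w
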